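/- If Φ : X ⇉ X* is cone-valued, norm-to-weak* cone upper semicontinuous at every point, and Φ(x) admits a base for each x ∈ X, then dom Φ = {x : Φ(x) ≠ ∅} is closed in X. -/
import Mathlib


open Topology Filter

def IsCone {D : Type*} [SMul ℝ D] (K : Set D) : Prop :=
  ∀ p ∈ K, ∀ t : ℝ, 0 < t → t • p ∈ K

def IsBase {D : Type*} [AddCommMonoid D] [Module ℝ D] [TopologicalSpace D]
    (K A : Set D) : Prop :=
  Convex ℝ A ∧ A ⊆ K ∧ K = {p | ∃ t : ℝ, 0 ≤ t ∧ ∃ a ∈ A, p = t • a} ∧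
    (0 : D) ∉ closure A

def ConeUSCAt {Y D : Type*} [TopologicalSpace Y] [SMul ℝ D] [TopologicalSpace D] [Zero D]
    (Φ : Y → Set D) (x : Y) : Prop :=
  ∀ Ω : Set D, IsOpen Ω → IsCone Ω → Φ x ⊆ Ω ∪ {0} →
    ∀ᶠ x' in 𝓝 x, Φ x' ⊆ Ω ∪ {0}

/-- If `Φ : X ⇉ X*` is cone-valued, norm-to-weak* cone upper semicontinuous at every
point, and each `Φ x` admits a base, then `dom Φ = {x | Φ x ≠ ∅}` is closed. -/
theorem dom_closed_of_coneUSC_and_base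
    {X : Type*} [NormedAddCommGroup X] [NormedSpace ℝ X] [CompleteSpace X]
    (Φ : X → Set (WeakDual ℝ X)) (hcone : ∀ x, IsCone (Φ x))
    (husc : ∀ x, ConeUSCAt Φ x) (hbase : ∀ x, ∃ A, IsBase (Φ x) A) :
    IsClosed {x : X | (Φ x).Nonempty} := by
  rw [← isOpen_compl_iff, isOpen_iff_mem_nhds]
  intro x hx
  have hempty : Φ x = ∅ := by
    simpa [Set.not_nonempty_iff_eq_empty] using hx
  have h := husc x ∅ isOpen_empty (fun p hp => hp.elim) (by simp [hempty])
  filter_upwards [h] with y hy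
  simp only [Set.mem_compl_iff, Set.mem_setOf_eq, Set.not_nonempty_iff_eq_empty]
  obtain ⟨A, _, hA2, hA3, hA4⟩ := hbase y
  by_contra hne
  obtain ⟨p, hp⟩ := Set.nonempty_iff_ne_empty.2 hne
  rw [hA3] at hp
  obtain ⟨t, _, a, haA, _⟩ := hp
  have ha0 : a = 0 := by simpa using hy (hA2 haA)
  exact hA4 (subset_closure (ha0 ▸ haA))
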